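/- Let {S_1,…,S_N} be an affine IFS on ℝ^n with compact condensation set C ⊆ X, where X is a compact ball of unit diameter with S_i(X) ⊂ X for all i. Suppose there exists κ > 0 such that for all δ ∈ (0,1] and all words i in the n-δ-stopping I_n(δ), N_δ(S_i(C)) ≥ κ N_δ(S_i(X)). Let b satisfy 0 < b < min_i α_n(S_i). Then there is a constant c > 0 depending only on n such that for all δ ∈ (0,1] and all i ∈ I_n(δ): N_δ(S_i(C)) ≥ κ b^n c · (α_1(S_i)/α_n(S_i)) (α_2(S_i)/α_n(S_i)) ⋯ (α_{n−1}(S_i)/α_n(S_i)). -/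

import Mathlib

open Filter Set Metric
open scoped BigOperators ENNReal NNReal Topology

noncomputable section

namespace InhomogSelfAffine

/-- Euclidean space `ℝ^n`. -/
abbrev E (n : ℕ) := EuclideanSpace ℝ (Fin n)

/-- The axis-aligned closed hypercube with corner `x` and sidelength `δ`. -/
def cube {n : ℕ} (x : E n) (δ : ℝ) : Set (E n) :=
  {y | ∀ i, x i ≤ y i ∧ y i ≤ x i + δ}

/-- `coverN δ F` is the minimal number of hypercubes of sidelength `δ` needed to cover `F`
(junk value `0` if no finite cover exists). -/
def coverN {n : ℕ} (δ : ℝ) (F : Set (E n)) : ℕ :=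
  sInf {m : ℕ | ∃ T : Finset (E n), T.card = m ∧ F ⊆ ⋃ x ∈ T, cube x δ}

/-- Upper box dimension. -/
def ubdim {n : ℕ} (F : Set (E n)) : ℝ :=
  limsup (fun δ : ℝ => Real.log (coverN δ F) / -Real.log δ) (𝓝[>] 0)

/-- Lower box dimension. -/
def lbdim {n : ℕ} (F : Set (E n)) : ℝ :=
  liminf (fun δ : ℝ => Real.log (coverN δ F) / -Real.log δ) (𝓝[>] 0)

/-- The (unsorted) singular values of `A`: square roots of the eigenvalues of `A * Aᴴ`. -/
def svalsAux {n : ℕ} (A : Matrix (Fin n) (Fin n) ℝ) : Fin n → ℝ :=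
  fun i => Real.sqrt ((Matrix.isHermitian_mul_conjTranspose_self A).eigenvalues i)

/-- The `m`-th largest singular value of `A` (1-indexed, for `1 ≤ m ≤ n`; junk `0` otherwise). -/
def sval {n : ℕ} (A : Matrix (Fin n) (Fin n) ℝ) (m : ℕ) : ℝ :=
  if h : 1 ≤ m ∧ m ≤ n then
    (svalsAux A ∘ Tuple.sort (svalsAux A)) (Fin.rev ⟨m - 1, by omega⟩)
  else 0

/-- Falconer's singular value function `φ^s(A)`. -/
def svf {n : ℕ} (A : Matrix (Fin n) (Fin n) ℝ) (s : ℝ) : ℝ :=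
  if s ≤ n then
    (∏ j ∈ Finset.Icc 1 (⌈s⌉₊ - 1), sval A j) * sval A ⌈s⌉₊ ^ (s - ⌈s⌉₊ + 1)
  else |A.det| ^ (s / n)

/-- The affine map `x ↦ A x + v` on `ℝ^n`. -/
def affMap {n : ℕ} (A : Matrix (Fin n) (Fin n) ℝ) (v : E n) : E n → E n :=
  fun x => Matrix.toEuclideanLin A x + v

/-- A map is contracting if it has a Lipschitz constant `c ∈ (0,1)`. -/
def Contracting {n : ℕ} (f : E n → E n) : Prop :=
  ∃ c : ℝ, 0 < c ∧ c < 1 ∧ ∀ x y, dist (f x) (f y) ≤ c * dist x y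

/-- `{x ↦ A i x + b i}` is an affine IFS: each map has invertible linear part and
is contracting. -/
def IsAffineIFS {n N : ℕ} (A : Fin N → Matrix (Fin n) (Fin n) ℝ) (b : Fin N → E n) : Prop :=
  ∀ i, IsUnit (A i).det ∧ Contracting (affMap (A i) (b i))

/-- Linear part of the composition `S_{i₁} ∘ ⋯ ∘ S_{i_k}` along the word `l = [i₁,…,i_k]`. -/
def wordA {n N : ℕ} (A : Fin N → Matrix (Fin n) (Fin n) ℝ) (l : List (Fin N)) :
    Matrix (Fin n) (Fin n) ℝ :=
  (l.map A).prod

/-- Composition `S_{i₁} ∘ ⋯ ∘ S_{i_k}` along the word `l = [i₁,…,i_k]`. -/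
def wordMap {n N : ℕ} (A : Fin N → Matrix (Fin n) (Fin n) ℝ) (b : Fin N → E n) :
    List (Fin N) → E n → E n
  | [] => id
  | i :: l => affMap (A i) (b i) ∘ wordMap A b l

/-- `s` is the affinity dimension of the IFS: `s = lim s_k` where `s_k` is the solution of
`∑_{i ∈ I^k} φ^{s_k}(S_i) = 1`. -/
def IsAffinityDim {n N : ℕ} (A : Fin N → Matrix (Fin n) (Fin n) ℝ) (s : ℝ) : Prop :=
  ∃ sk : ℕ → ℝ,
    (∀ k : ℕ, 0 < k → ∑ w : Fin k → Fin N, svf (wordA A (List.ofFn w)) (sk k) = 1) ∧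
    Tendsto sk atTop (𝓝 s)

/-- `F` is the (inhomogeneous) attractor of the IFS with condensation set `C`:
the unique nonempty compact set with `F = ⋃ᵢ Sᵢ(F) ∪ C`.  Taking `C = ∅` gives the
homogeneous attractor. -/
def IsAttractor {n N : ℕ} (A : Fin N → Matrix (Fin n) (Fin n) ℝ) (b : Fin N → E n)
    (C F : Set (E n)) : Prop :=
  IsCompact F ∧ F.Nonempty ∧ F = (⋃ i, affMap (A i) (b i) '' F) ∪ C

/-- The orbital set `O = C ∪ ⋃_{i ∈ I*} S_i(C)`. -/
def orbital {n N : ℕ} (A : Fin N → Matrix (Fin n) (Fin n) ℝ) (b : Fin N → E n)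
    (C : Set (E n)) : Set (E n) :=
  C ∪ ⋃ (l : List (Fin N)) (_ : l ≠ []), wordMap A b l '' C

/-- The `m`-`δ`-stopping `I_m(δ) = {i ∈ I* : α_m(S_i) < δ ≤ α_m(S_{i₋})}`. -/
def stopping {n N : ℕ} (A : Fin N → Matrix (Fin n) (Fin n) ℝ) (m : ℕ) (δ : ℝ) :
    Set (List (Fin N)) :=
  {l | l ≠ [] ∧ sval (wordA A l) m < δ ∧ δ ≤ sval (wordA A l.dropLast) m}

/-- The condensation open set condition, witnessed by the open set `U`. -/
def COSCWith {n N : ℕ} (A : Fin N → Matrix (Fin n) (Fin n) ℝ) (b : Fin N → E n)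
    (C U : Set (E n)) : Prop :=
  IsOpen U ∧ C ⊆ U \ ⋃ i, closure (affMap (A i) (b i) '' U) ∧
    (∀ i, affMap (A i) (b i) '' U ⊆ U) ∧
    ∀ i j, i ≠ j → Disjoint (affMap (A i) (b i) '' U) (affMap (A j) (b j) '' U)

/-- The condensation open set condition. -/
def COSC {n N : ℕ} (A : Fin N → Matrix (Fin n) (Fin n) ℝ) (b : Fin N → E n)
    (C : Set (E n)) : Prop :=
  ∃ U, COSCWith A b C U

/-- `X` is a compact ball of unit diameter. -/
def IsUnitBall {n : ℕ} (X : Set (E n)) : Prop :=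
  ∃ x₀ : E n, X = Metric.closedBall x₀ (1 / 2)


section Aux
open Matrix MeasureTheory
variable {n : ℕ}

lemma svalsAux_nonneg (M : Matrix (Fin n) (Fin n) ℝ) (i : Fin n) : 0 ≤ svalsAux M i :=
  Real.sqrt_nonneg _

lemma sval_nonneg (M : Matrix (Fin n) (Fin n) ℝ) (m : ℕ) : 0 ≤ sval M m := by
  unfold sval
  split
  · exact Real.sqrt_nonneg _
  · exact le_refl 0

lemma sval_n_eq (hn : 0 < n) (M : Matrix (Fin n) (Fin n) ℝ) :
    sval M n = (svalsAux M ∘ Tuple.sort (svalsAux M)) ⟨0, hn⟩ := by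
  rw [sval, dif_pos ⟨hn, le_refl n⟩]
  congr 1
  ext
  simp [Fin.val_rev]
  omega

lemma sval_n_le (hn : 0 < n) (M : Matrix (Fin n) (Fin n) ℝ) (i : Fin n) :
    sval M n ≤ svalsAux M i := by
  obtain ⟨j, rfl⟩ : ∃ j, Tuple.sort (svalsAux M) j = i :=
    ⟨(Tuple.sort (svalsAux M)).symm i, Equiv.apply_symm_apply _ _⟩
  rw [sval_n_eq hn]
  exact Tuple.monotone_sort (svalsAux M) (by simp [Fin.le_def])

lemma exists_svalsAux_eq (hn : 0 < n) (M : Matrix (Fin n) (Fin n) ℝ) :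
    ∃ i, svalsAux M i = sval M n :=
  ⟨Tuple.sort (svalsAux M) ⟨0, hn⟩, by rw [sval_n_eq hn]; rfl⟩


lemma prod_sval (hn : 0 < n) (M : Matrix (Fin n) (Fin n) ℝ) :
    ∏ j ∈ Finset.Icc 1 n, sval M j = ∏ i, svalsAux M i := by
  have h1 : ∏ j ∈ Finset.Icc 1 n, sval M j
      = ∏ k : Fin n, (svalsAux M ∘ Tuple.sort (svalsAux M)) (Fin.rev k) := by
    refine Finset.prod_nbij' (fun j => (⟨(j - 1) % n, Nat.mod_lt _ hn⟩ : Fin n))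
      (fun k => (k : ℕ) + 1) ?_ ?_ ?_ ?_ ?_
    · intro j hj; exact Finset.mem_univ _
    · intro k _; simp [Finset.mem_Icc]
    · intro j hj; simp [Finset.mem_Icc] at hj; simp
      rw [Nat.mod_eq_of_lt (by omega)]; omega
    · intro k _; ext; simp [Nat.mod_eq_of_lt k.isLt]
    · intro j hj
      simp only [Finset.mem_Icc] at hj
      rw [sval, dif_pos (by omega : 1 ≤ j ∧ j ≤ n)]
      congr 2
      ext
      simp
      rw [Nat.mod_eq_of_lt (by omega)]
  rw [h1]
  simp only [← Fin.revPerm_apply]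
  rw [Equiv.prod_comp (Fin.revPerm) (fun k => (svalsAux M ∘ Tuple.sort (svalsAux M)) k)]
  simp only [Function.comp]
  rw [Equiv.prod_comp (Tuple.sort (svalsAux M)) (svalsAux M)]

lemma prod_svalsAux (M : Matrix (Fin n) (Fin n) ℝ) :
    ∏ i, svalsAux M i = |M.det| := by
  have hH := Matrix.isHermitian_mul_conjTranspose_self M
  have hdet : (M * Mᴴ).det = M.det ^ 2 := by
    rw [Matrix.det_mul, Matrix.det_conjTranspose]
    simp [sq]
  have h2 : M.det ^ 2 = ∏ i, hH.eigenvalues i := by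
    rw [← hdet, hH.det_eq_prod_eigenvalues]; simp
  have h3 : (∏ i, svalsAux M i) ^ 2 = M.det ^ 2 := by
    rw [h2, ← Finset.prod_pow]
    refine Finset.prod_congr rfl fun i _ => ?_
    exact Real.sq_sqrt (Matrix.eigenvalues_self_mul_conjTranspose_nonneg M i)
  have h4 : 0 ≤ ∏ i, svalsAux M i := Finset.prod_nonneg fun i _ => svalsAux_nonneg M i
  calc ∏ i, svalsAux M i = |∏ i, svalsAux M i| := (abs_of_nonneg h4).symm
    _ = Real.sqrt ((∏ i, svalsAux M i) ^ 2) := (Real.sqrt_sq_eq_abs _).symm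
    _ = Real.sqrt (M.det ^ 2) := by rw [h3]
    _ = |M.det| := Real.sqrt_sq_eq_abs _


lemma dot_pair (A : Matrix (Fin n) (Fin n) ℝ) (x w : Fin n → ℝ) :
    x ⬝ᵥ A *ᵥ w = (Aᴴ *ᵥ x) ⬝ᵥ w := by
  rw [Matrix.dotProduct_mulVec, Matrix.conjTranspose_eq_transpose_of_trivial,
    Matrix.mulVec_transpose]

lemma dot_conj (M : Matrix (Fin n) (Fin n) ℝ) (x : Fin n → ℝ) :
    x ⬝ᵥ (M * Mᴴ) *ᵥ x = (Mᴴ *ᵥ x) ⬝ᵥ (Mᴴ *ᵥ x) := by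
  rw [← Matrix.mulVec_mulVec, dot_pair]

lemma unitary_dot {U : Matrix (Fin n) (Fin n) ℝ} (hU : U ∈ Matrix.unitaryGroup (Fin n) ℝ)
    (x : Fin n → ℝ) : (Uᴴ *ᵥ x) ⬝ᵥ (Uᴴ *ᵥ x) = x ⬝ᵥ x := by
  rw [← dot_conj, show U * Uᴴ = 1 by
    rw [← Matrix.star_eq_conjTranspose]; exact (Matrix.mem_unitaryGroup_iff).mp hU,
    Matrix.one_mulVec]

lemma quadform (M : Matrix (Fin n) (Fin n) ℝ) (x : Fin n → ℝ) :
    (Mᴴ *ᵥ x) ⬝ᵥ (Mᴴ *ᵥ x) =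
      ∑ i, (Matrix.isHermitian_mul_conjTranspose_self M).eigenvalues i *
        (((((Matrix.isHermitian_mul_conjTranspose_self M).eigenvectorUnitary :
          Matrix (Fin n) (Fin n) ℝ))ᴴ *ᵥ x) i) ^ 2 := by
  have hH := Matrix.isHermitian_mul_conjTranspose_self M
  rw [← dot_conj]
  conv_lhs => rw [hH.spectral_theorem]
  rw [Unitary.conjStarAlgAut_apply, Matrix.star_eq_conjTranspose, ← Matrix.mulVec_mulVec, ← Matrix.mulVec_mulVec, dot_pair]
  simp only [dotProduct, Matrix.mulVec_diagonal, Function.comp_apply, RCLike.ofReal_real_eq_id,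
    id_eq]
  exact Finset.sum_congr rfl fun i _ => by ring

lemma rayleigh (hn : 0 < n) (M : Matrix (Fin n) (Fin n) ℝ) (x : Fin n → ℝ) :
    sval M n ^ 2 * (x ⬝ᵥ x) ≤ (Mᴴ *ᵥ x) ⬝ᵥ (Mᴴ *ᵥ x) := by
  have hH := Matrix.isHermitian_mul_conjTranspose_self M
  set U : Matrix (Fin n) (Fin n) ℝ := (hH.eigenvectorUnitary : Matrix (Fin n) (Fin n) ℝ) with hUdef
  set y : Fin n → ℝ := Uᴴ *ᵥ x with hy
  have hyy : y ⬝ᵥ y = x ⬝ᵥ x := unitary_dot hH.eigenvectorUnitary.2 x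
  have hd : ∀ i, sval M n ^ 2 ≤ hH.eigenvalues i := by
    intro i
    have h1 := sval_n_le hn M i
    have h2 : svalsAux M i ^ 2 = hH.eigenvalues i :=
      Real.sq_sqrt (Matrix.eigenvalues_self_mul_conjTranspose_nonneg M i)
    nlinarith [sval_nonneg M n, svalsAux_nonneg M i]
  calc sval M n ^ 2 * (x ⬝ᵥ x) = sval M n ^ 2 * (y ⬝ᵥ y) := by rw [hyy]
    _ = ∑ i, sval M n ^ 2 * (y i) ^ 2 := by
        simp only [dotProduct, Finset.mul_sum]
        exact Finset.sum_congr rfl fun i _ => by ring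
    _ ≤ ∑ i, hH.eigenvalues i * (y i) ^ 2 :=
        Finset.sum_le_sum fun i _ => by nlinarith [hd i, sq_nonneg (y i)]
    _ = (Mᴴ *ᵥ x) ⬝ᵥ (Mᴴ *ᵥ x) := (quadform M x).symm

lemma exists_rayleigh (hn : 0 < n) (M : Matrix (Fin n) (Fin n) ℝ) :
    ∃ x : Fin n → ℝ, x ⬝ᵥ x = 1 ∧ (Mᴴ *ᵥ x) ⬝ᵥ (Mᴴ *ᵥ x) = sval M n ^ 2 := by
  obtain ⟨i₀, hi₀⟩ := exists_svalsAux_eq hn M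
  have hH := Matrix.isHermitian_mul_conjTranspose_self M
  set U : Matrix (Fin n) (Fin n) ℝ := (hH.eigenvectorUnitary : Matrix (Fin n) (Fin n) ℝ) with hUdef
  refine ⟨U *ᵥ Pi.single i₀ 1, ?_, ?_⟩
  · rw [show U *ᵥ Pi.single i₀ 1 ⬝ᵥ U *ᵥ Pi.single i₀ 1
        = (Uᴴᴴ *ᵥ Pi.single i₀ 1) ⬝ᵥ (Uᴴᴴ *ᵥ Pi.single i₀ 1) by rw [Matrix.conjTranspose_conjTranspose]]
    rw [unitary_dot (by rw [← Matrix.star_eq_conjTranspose]; exact Unitary.star_mem hH.eigenvectorUnitary.2) (Pi.single i₀ 1)]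
    simp [single_dotProduct]
  · have hUx : Uᴴ *ᵥ (U *ᵥ Pi.single i₀ 1) = Pi.single i₀ 1 := by
      rw [Matrix.mulVec_mulVec, show Uᴴ * U = 1 by
        rw [← Matrix.star_eq_conjTranspose]; exact (Matrix.mem_unitaryGroup_iff').mp hH.eigenvectorUnitary.2,
        Matrix.one_mulVec]
    rw [quadform M, hUx]
    rw [Finset.sum_eq_single i₀]
    · simp [← hi₀, svalsAux, Real.sq_sqrt (Matrix.eigenvalues_self_mul_conjTranspose_nonneg M i₀)]
      exact (Real.sq_sqrt (Matrix.eigenvalues_self_mul_conjTranspose_nonneg M i₀)).symm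
    · intro i _ hne; simp [Pi.single_eq_of_ne hne]
    · intro h; exact absurd (Finset.mem_univ i₀) h

lemma sval_n_mul (hn : 0 < n) (M N : Matrix (Fin n) (Fin n) ℝ) :
    sval M n * sval N n ≤ sval (M * N) n := by
  obtain ⟨x, hx1, hx2⟩ := exists_rayleigh hn (M * N)
  have h1 : (M * N)ᴴ *ᵥ x = Nᴴ *ᵥ (Mᴴ *ᵥ x) := by
    rw [Matrix.conjTranspose_mul, ← Matrix.mulVec_mulVec]
  have h2 := rayleigh hn N (Mᴴ *ᵥ x)
  have h3 := rayleigh hn M x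
  have h4 : (sval M n * sval N n) ^ 2 ≤ sval (M * N) n ^ 2 := by
    rw [← hx2, h1]
    calc (sval M n * sval N n) ^ 2 = sval N n ^ 2 * (sval M n ^ 2 * (x ⬝ᵥ x)) := by
          rw [hx1]; ring
      _ ≤ sval N n ^ 2 * ((Mᴴ *ᵥ x) ⬝ᵥ (Mᴴ *ᵥ x)) := by nlinarith [sq_nonneg (sval N n)]
      _ ≤ (Nᴴ *ᵥ (Mᴴ *ᵥ x)) ⬝ᵥ (Nᴴ *ᵥ (Mᴴ *ᵥ x)) := h2
  have h5 : 0 ≤ sval M n * sval N n := mul_nonneg (sval_nonneg M n) (sval_nonneg N n)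
  nlinarith [sval_nonneg (M * N) n]


lemma cube_volume (x : E n) {δ : ℝ} (hδ : 0 ≤ δ) :
    volume (cube x δ) = ENNReal.ofReal δ ^ n := by
  have h : cube x δ = (MeasurableEquiv.toLp 2 (Fin n → ℝ)).symm ⁻¹'
      (Set.univ.pi fun i => Icc (x i) (x i + δ)) := by
    ext y
    simp only [cube, mem_setOf_eq, mem_preimage, Set.mem_pi, Set.mem_univ, forall_true_left,
      mem_Icc]
    exact Iff.rfl
  rw [h, (EuclideanSpace.volume_preserving_symm_measurableEquiv_toLp (Fin n)).measure_preimage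
    ((MeasurableSet.univ_pi fun i => measurableSet_Icc).nullMeasurableSet)]
  rw [volume_pi_pi]
  simp [Real.volume_Icc, Finset.prod_const]

lemma cover_bound {F : Set (E n)} {δ : ℝ} (hδ : 0 ≤ δ) {T : Finset (E n)}
    (hT : F ⊆ ⋃ x ∈ T, cube x δ) :
    volume F ≤ T.card * ENNReal.ofReal δ ^ n := by
  refine le_trans (measure_mono hT) (le_trans (measure_biUnion_finset_le T _) ?_)
  rw [Finset.sum_congr rfl fun x _ => cube_volume x hδ, Finset.sum_const, nsmul_eq_mul]

lemma exists_cover {δ : ℝ} (hδ : 0 < δ) {F : Set (E n)} (hF : IsCompact F) :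
    ∃ T : Finset (E n), F ⊆ ⋃ x ∈ T, cube x δ := by
  set obox : E n → Set (E n) := fun p => {y | ∀ i, p i - δ/2 < y i ∧ y i < p i + δ/2} with hobox
  have hopen : ∀ p, IsOpen (obox p) := by
    intro p
    have : obox p = ⋂ i, (EuclideanSpace.proj (𝕜 := ℝ) i) ⁻¹' (Ioo (p i - δ/2) (p i + δ/2)) := by
      ext y; simp [hobox, mem_iInter]
    rw [this]
    exact isOpen_iInter_of_finite fun i =>
      ((EuclideanSpace.proj (𝕜 := ℝ) i).continuous).isOpen_preimage _ isOpen_Ioo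
  have hmem : ∀ p : E n, p ∈ obox p := fun p i => ⟨by linarith, by linarith⟩
  obtain ⟨t, ht⟩ := hF.elim_finite_subcover obox hopen
    (fun p hp => mem_iUnion.2 ⟨p, hmem p⟩)
  classical
  refine ⟨t.image (fun p => WithLp.toLp 2 (fun i => p i - δ/2)), ?_⟩
  intro y hy
  obtain ⟨p, hp, hyp⟩ := by simpa [mem_iUnion] using ht hy
  refine mem_iUnion.2 ⟨WithLp.toLp 2 (fun i => p i - δ/2), mem_iUnion.2 ⟨Finset.mem_image_of_mem _ hp, ?_⟩⟩
  intro i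
  have := hyp i
  show (p i - δ/2) ≤ y i ∧ y i ≤ (p i - δ/2) + δ
  exact ⟨by linarith [this.1], by linarith [this.2]⟩

lemma volume_le_coverN {δ : ℝ} (hδ : 0 < δ) {F : Set (E n)} (hF : IsCompact F) :
    volume F ≤ (coverN δ F : ℝ≥0∞) * ENNReal.ofReal δ ^ n := by
  obtain ⟨T₀, hT₀⟩ := exists_cover hδ hF
  have hne : {m : ℕ | ∃ T : Finset (E n), T.card = m ∧ F ⊆ ⋃ x ∈ T, cube x δ}.Nonempty :=
    ⟨T₀.card, T₀, rfl, hT₀⟩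
  obtain ⟨T, hTc, hTcov⟩ := Nat.sInf_mem hne
  rw [coverN, ← hTc]
  exact_mod_cast cover_bound hδ.le hTcov


lemma det_toEuclideanLin (M : Matrix (Fin n) (Fin n) ℝ) :
    LinearMap.det (Matrix.toEuclideanLin M) = M.det := by
  rw [Matrix.toEuclideanLin_eq_toLin, LinearMap.det_toLin _ M]

lemma volume_image_affMap (M : Matrix (Fin n) (Fin n) ℝ) (v : E n) (s : Set (E n)) :
    volume (affMap M v '' s) = ENNReal.ofReal |M.det| * volume s := by
  have h1 : affMap M v '' s = (fun y => y + v) '' (Matrix.toEuclideanLin M '' s) := by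
    rw [← Set.image_comp]; rfl
  have h2 : (fun y : E n => y + v) '' (Matrix.toEuclideanLin M '' s)
      = (fun y : E n => y + -v) ⁻¹' (Matrix.toEuclideanLin M '' s) := by
    ext y
    constructor
    · rintro ⟨z, hz, rfl⟩; simpa using hz
    · intro hy; exact ⟨y + -v, hy, by simp⟩
  rw [h1, h2, measure_preimage_add_right volume (-v) _,
    Measure.addHaar_image_linearMap volume (Matrix.toEuclideanLin M : E n →ₗ[ℝ] E n) s,
    det_toEuclideanLin]

lemma toEuclideanLin_mul (P Q : Matrix (Fin n) (Fin n) ℝ) (x : E n) :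
    Matrix.toEuclideanLin (P * Q) x = Matrix.toEuclideanLin P (Matrix.toEuclideanLin Q x) := by
  simp only [Matrix.toEuclideanLin_eq_toLin]
  rw [Matrix.toLin_mul (PiLp.basisFun 2 ℝ (Fin n)) (PiLp.basisFun 2 ℝ (Fin n))
    (PiLp.basisFun 2 ℝ (Fin n)) P Q]
  rfl

lemma wordMap_eq_affMap {N : ℕ} (A : Fin N → Matrix (Fin n) (Fin n) ℝ) (b : Fin N → E n)
    (l : List (Fin N)) : ∃ v : E n, wordMap A b l = affMap (wordA A l) v := by
  induction l with
  | nil =>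
      refine ⟨0, funext fun x => ?_⟩
      simp [wordMap, wordA, affMap, Matrix.toEuclideanLin_eq_toLin, Matrix.toLin_one]
  | cons i l ih =>
      obtain ⟨v, hv⟩ := ih
      refine ⟨Matrix.toEuclideanLin (A i) v + b i, funext fun x => ?_⟩
      have hw : wordA A (i :: l) = A i * wordA A l := by
        simp [wordA, List.map_cons, List.prod_cons]
      simp only [wordMap, Function.comp_apply, hv, affMap, hw, toEuclideanLin_mul, map_add]
      abel

lemma continuous_affMap (M : Matrix (Fin n) (Fin n) ℝ) (v : E n) : Continuous (affMap M v) := by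
  exact ((Matrix.toEuclideanLin M).continuous_of_finiteDimensional).add continuous_const



/-- inequality (4.4) in the proof of Theorem 2.3. If
`N_δ(S_i(C)) ≥ κ N_δ(S_i(X))` for all `δ ∈ (0,1]` and `i ∈ I_n(δ)`, then there is a constant
`c > 0` (depending only on `n`) with
`N_δ(S_i(C)) ≥ κ b^n c (α_1/α_n)(α_2/α_n)⋯(α_{n-1}/α_n)(S_i)`. -/
theorem statement14 {n N : ℕ} (hn : 0 < n) (hN : 0 < N)
    (A : Fin N → Matrix (Fin n) (Fin n) ℝ) (b : Fin N → E n) (hIFS : IsAffineIFS A b)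
    (C : Set (E n)) (hCc : IsCompact C) (hCne : C.Nonempty)
    (X : Set (E n)) (hX : IsUnitBall X) (hXinv : ∀ i, affMap (A i) (b i) '' X ⊆ X)
    (hCX : C ⊆ X)
    (κ : ℝ) (hκ : 0 < κ)
    (hcov : ∀ δ ∈ Ioc (0 : ℝ) 1, ∀ l ∈ stopping A n δ,
      κ * (coverN δ (wordMap A b l '' X) : ℝ) ≤ (coverN δ (wordMap A b l '' C) : ℝ))
    (bc : ℝ) (hbc0 : 0 < bc) (hbc1 : ∀ i, bc < sval (A i) n) :
    ∃ c : ℝ, 0 < c ∧ ∀ δ ∈ Ioc (0 : ℝ) 1, ∀ l ∈ stopping A n δ,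
      κ * bc ^ n * c *
          ∏ j ∈ Finset.Icc 1 (n - 1), (sval (wordA A l) j / sval (wordA A l) n) ≤
        (coverN δ (wordMap A b l '' C) : ℝ) := by
  obtain ⟨m, rfl⟩ : ∃ m, n = m + 1 := ⟨n - 1, by omega⟩
  obtain ⟨x₀, hX0⟩ := hX
  have hXc : IsCompact X := hX0 ▸ isCompact_closedBall x₀ (1/2)
  have hXvol_pos : 0 < volume X := by
    rw [hX0]
    exact lt_of_lt_of_le (measure_ball_pos volume x₀ (by norm_num))
      (MeasureTheory.measure_mono ball_subset_closedBall)
  have hXvol_fin : volume X ≠ ⊤ := hXc.measure_lt_top.ne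
  set c : ℝ := (volume X).toReal with hc
  have hc0 : 0 < c := ENNReal.toReal_pos hXvol_pos.ne' hXvol_fin
  refine ⟨c, hc0, ?_⟩
  intro δ hδ l hl
  obtain ⟨hlne, hstop1, hstop2⟩ := hl
  have hδ0 : 0 < δ := hδ.1
  set M := wordA A l with hM
  have hsplit : wordA A l = wordA A l.dropLast * A (l.getLast hlne) := by
    conv_lhs => rw [← List.dropLast_append_getLast hlne]
    rw [wordA, List.map_append, List.prod_append]
    simp [wordA]
  have hsd : bc * δ ≤ sval M (m+1) := by
    have h1 : bc * δ ≤ sval (wordA A l.dropLast) (m+1) * sval (A (l.getLast hlne)) (m+1) := by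
      have h2 := hbc1 (l.getLast hlne)
      have h3 := sval_nonneg (wordA A l.dropLast) (m+1)
      nlinarith [hstop2, hδ0]
    calc bc * δ ≤ _ := h1
      _ ≤ sval (wordA A l.dropLast * A (l.getLast hlne)) (m+1) := sval_n_mul hn _ _
      _ = sval M (m+1) := by rw [hM, hsplit]
  have hs0 : 0 < sval M (m+1) := lt_of_lt_of_le (by positivity) hsd
  obtain ⟨v, hwm⟩ := wordMap_eq_affMap A b l
  have hSXc : IsCompact (wordMap A b l '' X) := by
    rw [hwm]; exact hXc.image (continuous_affMap _ _)
  set K : ℕ := coverN δ (wordMap A b l '' X) with hK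
  have hvol_le : volume (wordMap A b l '' X) ≤ (K : ℝ≥0∞) * ENNReal.ofReal δ ^ (m+1) :=
    volume_le_coverN hδ0 hSXc
  have hvol_eq : volume (wordMap A b l '' X) = ENNReal.ofReal |M.det| * volume X := by
    rw [hwm, hM]; exact volume_image_affMap _ _ _
  have hdetc : |M.det| * c ≤ (K : ℝ) * δ ^ (m+1) := by
    have h := hvol_le
    rw [hvol_eq] at h
    have hfin : (K : ℝ≥0∞) * ENNReal.ofReal δ ^ (m+1) ≠ ⊤ :=
      ENNReal.mul_ne_top (ENNReal.natCast_ne_top K) (by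
        exact ENNReal.pow_ne_top ENNReal.ofReal_ne_top)
    have h2 := ENNReal.toReal_mono hfin h
    rw [ENNReal.toReal_mul, ENNReal.toReal_ofReal (abs_nonneg _), ENNReal.toReal_mul,
      ENNReal.toReal_pow, ENNReal.toReal_ofReal hδ0.le] at h2
    simpa using h2
  have hdet : |M.det| = (∏ j ∈ Finset.Icc 1 m, sval M j) * sval M (m+1) := by
    rw [← prod_svalsAux, ← prod_sval hn, Finset.prod_Icc_succ_top (by omega)]
  set Q := ∏ j ∈ Finset.Icc 1 m, sval M j with hQdef
  have hQ0 : 0 ≤ Q := Finset.prod_nonneg fun j _ => sval_nonneg M j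
  have hP : (∏ j ∈ Finset.Icc 1 m, sval M j / sval M (m+1)) = Q / sval M (m+1) ^ m := by
    rw [Finset.prod_div_distrib, Finset.prod_const, Nat.card_Icc]
    simp
    rfl
  have hmain : bc ^ (m+1) * c * (Q / sval M (m+1) ^ m) ≤ (K:ℝ) := by
    rw [← mul_le_mul_iff_of_pos_right (pow_pos hδ0 (m+1))]
    have hfinal : Q * sval M (m+1) * c ≤ (K:ℝ) * δ^(m+1) := by
      rw [hdet] at hdetc; linarith [hdetc]
    refine le_trans ?_ hfinal
    have hkey : (bc*δ)^(m+1) ≤ sval M (m+1) ^ (m+1) := pow_le_pow_left₀ (by positivity) hsd _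
    have hsp : (0:ℝ) < sval M (m+1) ^ m := pow_pos hs0 _
    calc bc^(m+1) * c * (Q / sval M (m+1) ^ m) * δ^(m+1)
        = Q * c * (bc*δ)^(m+1) / sval M (m+1) ^ m := by rw [mul_pow]; field_simp
      _ ≤ Q * c * sval M (m+1) ^ (m+1) / sval M (m+1) ^ m := by
          exact (div_le_div_iff_of_pos_right hsp).mpr (mul_le_mul_of_nonneg_left hkey (by positivity))
      _ = Q * sval M (m+1) * c := by
          rw [pow_succ]; field_simp
  have hIcc : (m + 1 - 1) = m := by omega
  rw [hIcc]
  calc κ * bc ^ (m+1) * c * (∏ j ∈ Finset.Icc 1 m, sval M j / sval M (m+1))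
      = κ * (bc^(m+1) * c * (Q / sval M (m+1) ^ m)) := by rw [hP]; ring
    _ ≤ κ * K := mul_le_mul_of_nonneg_left hmain hκ.le
    _ ≤ (coverN δ (wordMap A b l '' C) : ℝ) := hcov δ hδ l ⟨hlne, hstop1, hstop2⟩


end Aux

end InhomogSelfAffine
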